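/- Let (E, L, E) be a labeled space with E the smallest non-degenerate accommodating set. If S(H(A)) = E for every nonempty A ∈ E (where S(H(A)) is the smallest hereditary saturated set containing A), then: (E, L, E) is strongly cofinal, and for every nonempty A ∈ E and every B ∈ E there exists C ∈ E_reg such that B \ C ∈ H(A). -/

import Mathlib

universe u v

variable {V : Type u} {Λ : Type v}

/-- The relative range `r(S, α)` of a set of vertices along a labeled path. -/
def relRange (Edge : V → Λ → V → Prop) : Set V → List Λ → Set V
  | S, [] => S
  | S, a :: α => relRange Edge {w | ∃ u ∈ S, Edge u a w} α

/-- The range `r(α)` of a labeled path. -/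
def lrange (Edge : V → Λ → V → Prop) (α : List Λ) : Set V :=
  relRange Edge Set.univ α

/-- `α` is a (nonempty) labeled path of the labeled graph. -/
def IsLP (Edge : V → Λ → V → Prop) (α : List Λ) : Prop :=
  α ≠ [] ∧ (lrange Edge α).Nonempty

/-- `L(SE¹)`: labels of edges emitted from `S`. -/
def edgeLabels (Edge : V → Λ → V → Prop) (S : Set V) : Set Λ :=
  {a | ∃ u ∈ S, ∃ w, Edge u a w}

/-- `S` is regular: every nonempty `B ∈ ℬ` with `B ⊆ S` emits a finite nonzero set of labels. -/
def RegularSet (Edge : V → Λ → V → Prop) (ℬ : Set (Set V)) (S : Set V) : Prop :=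
  ∀ B ∈ ℬ, B ⊆ S → B.Nonempty →
    (edgeLabels Edge B).Finite ∧ (edgeLabels Edge B).Nonempty

/-- `H ⊆ ℬ` is hereditary. -/
def Hered (Edge : V → Λ → V → Prop) (ℬ H : Set (Set V)) : Prop :=
  H ⊆ ℬ ∧ (∀ A ∈ H, ∀ α : List Λ, IsLP Edge α → relRange Edge A α ∈ H) ∧
    (∀ A ∈ H, ∀ B ∈ H, A ∪ B ∈ H) ∧ (∀ A ∈ H, ∀ B ∈ ℬ, B ⊆ A → B ∈ H)

/-- `H` is saturated. -/
def Satur (Edge : V → Λ → V → Prop) (ℬ H : Set (Set V)) : Prop :=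
  ∀ A ∈ ℬ, RegularSet Edge ℬ A →
    (∀ α : List Λ, IsLP Edge α → relRange Edge A α ∈ H) → A ∈ H

/-- `H(A)`: sets covered by finitely many relative ranges `r(A, αᵢ)`, `αᵢ ∈ L^#(E)`. -/
def HSet (Edge : V → Λ → V → Prop) (ℬ : Set (Set V)) (A : Set V) : Set (Set V) :=
  {B ∈ ℬ | ∃ l : List (List Λ), (∀ α ∈ l, α = [] ∨ IsLP Edge α) ∧
    B ⊆ ⋃ α ∈ l, relRange Edge A α}

/-- `S(H(A))`: the saturation of `H(A)`. -/
def SHSet (Edge : V → Λ → V → Prop) (ℬ : Set (Set V)) (A : Set V) : Set (Set V) :=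
  {B ∈ ℬ | ∃ n : ℕ,
    (∀ β : List Λ, (β = [] ∨ IsLP Edge β) → β.length = n →
      relRange Edge B β ∈ HSet Edge ℬ A) ∧
    (∀ γ : List Λ, (γ = [] ∨ IsLP Edge γ) → γ.length < n →
      ∃ C ∈ HSet Edge ℬ A, ∃ D ∈ ℬ, RegularSet Edge ℬ D ∧ relRange Edge B γ = C ∪ D)}

/-- `ℬ` is an accommodating set for the labeled graph. -/
def Accommodating (Edge : V → Λ → V → Prop) (ℬ : Set (Set V)) : Prop :=
  (∀ α : List Λ, IsLP Edge α → lrange Edge α ∈ ℬ) ∧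
    (∀ A ∈ ℬ, ∀ α : List Λ, IsLP Edge α → relRange Edge A α ∈ ℬ) ∧
    (∀ A ∈ ℬ, ∀ B ∈ ℬ, A ∪ B ∈ ℬ) ∧ (∀ A ∈ ℬ, ∀ B ∈ ℬ, A ∩ B ∈ ℬ)

/-- `ℬ` is non-degenerate: closed under relative complements (and contains `∅`). -/
def NonDegenerate (ℬ : Set (Set V)) : Prop :=
  (∅ : Set V) ∈ ℬ ∧ ∀ A ∈ ℬ, ∀ B ∈ ℬ, A \ B ∈ ℬ

/-- The labeled space is weakly left-resolving. -/
def WLR (Edge : V → Λ → V → Prop) (ℬ : Set (Set V)) : Prop :=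
  ∀ A ∈ ℬ, ∀ B ∈ ℬ, ∀ α : List Λ, IsLP Edge α →
    relRange Edge (A ∩ B) α = relRange Edge A α ∩ relRange Edge B α

/-- `ℬ` is the smallest non-degenerate accommodating set. -/
def SmallestAccom (Edge : V → Λ → V → Prop) (ℬ : Set (Set V)) : Prop :=
  Accommodating Edge ℬ ∧ NonDegenerate ℬ ∧
    ∀ ℬ' : Set (Set V), Accommodating Edge ℬ' → NonDegenerate ℬ' → ℬ ⊆ ℬ'

/-- `x_{[1,n]}`: the length-`n` prefix of an infinite word. -/
def wordPrefix (x : ℕ → Λ) (n : ℕ) : List Λ := List.ofFn fun i : Fin n => x i.val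

/-- `x` lies in the closure of `L(E^∞)`: all finite prefixes are labeled paths. -/
def InfWord (Edge : V → Λ → V → Prop) (x : ℕ → Λ) : Prop :=
  ∀ n : ℕ, 1 ≤ n → IsLP Edge (wordPrefix x n)

/-- Strong cofinality of a labeled space. -/
def StrCofinal (Edge : V → Λ → V → Prop) (ℬ : Set (Set V)) : Prop :=
  ∀ A ∈ ℬ, A.Nonempty → ∀ x : ℕ → Λ, InfWord Edge x →
    ∃ N : ℕ, 1 ≤ N ∧ ∃ l : List (List Λ), (∀ α ∈ l, IsLP Edge α) ∧
      lrange Edge (wordPrefix x N) ⊆ ⋃ α ∈ l, relRange Edge A α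

/-- Minimality: the only hereditary saturated subsets of `ℬ` are `{∅}` and `ℬ`. -/
def MinimalLS (Edge : V → Λ → V → Prop) (ℬ : Set (Set V)) : Prop :=
  ∀ H : Set (Set V), Hered Edge ℬ H → Satur Edge ℬ H → H ⊆ {∅} ∨ H = ℬ

/-- `L(SEⁿ)`: labels of paths of length `n` with source in `S`. -/
def labelsOfLen (Edge : V → Λ → V → Prop) (S : Set V) (n : ℕ) : Set (List Λ) :=
  {β | β.length = n ∧ (relRange Edge S β).Nonempty}

/-- The labeled space is disagreeable. -/
def Disagreeable (Edge : V → Λ → V → Prop) (ℬ : Set (Set V)) : Prop :=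
  ∀ A ∈ ℬ, A.Nonempty → ∀ β : List Λ, IsLP Edge β →
    ∃ n : ℕ, 1 ≤ n ∧ labelsOfLen Edge A (β.length * n) ≠ {(List.replicate n β).flatten}

/-- `(α, A)` is a cycle. -/
def IsCycle (Edge : V → Λ → V → Prop) (ℬ : Set (Set V)) (α : List Λ) (A : Set V) : Prop :=
  IsLP Edge α ∧ A ∈ ℬ ∧ A.Nonempty ∧ ∀ B ∈ ℬ, B ⊆ A → relRange Edge B α = B

/-- The cycle `(α, A)` has an exit. -/
def CycleHasExit (Edge : V → Λ → V → Prop) (ℬ : Set (Set V)) (α : List Λ) (A : Set V) : Prop :=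
  ∃ t : ℕ, 1 ≤ t ∧ t ≤ α.length ∧ ∃ B ∈ ℬ, B.Nonempty ∧
    B ⊆ relRange Edge A (α.take t) ∧
    edgeLabels Edge B ≠ {a : Λ | α[t % α.length]? = some a}

/-- The cycle `(α, A)` has no exits. -/
def CycleNoExit (Edge : V → Λ → V → Prop) (ℬ : Set (Set V)) (α : List Λ) (A : Set V) : Prop :=
  ∀ t : ℕ, 1 ≤ t → t ≤ α.length → ∀ B ∈ ℬ, B.Nonempty →
    B ⊆ relRange Edge A (α.take t) →
    RegularSet Edge ℬ B ∧ edgeLabels Edge B = {a : Λ | α[t % α.length]? = some a}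

/-- Condition (L): every cycle has an exit. -/
def CondL (Edge : V → Λ → V → Prop) (ℬ : Set (Set V)) : Prop :=
  ∀ (α : List Λ) (A : Set V), IsCycle Edge ℬ α A → CycleHasExit Edge ℬ α A

/-- `α` is a loop at `A`. -/
def IsLoop (Edge : V → Λ → V → Prop) (α : List Λ) (A : Set V) : Prop :=
  IsLP Edge α ∧ A ⊆ relRange Edge A α

/-- The loop `(α, A)` has an exit. -/
def LoopHasExit (Edge : V → Λ → V → Prop) (α : List Λ) (A : Set V) : Prop :=
  {β : List Λ | ∃ k : ℕ, 1 ≤ k ∧ k ≤ α.length ∧ β = α.take k} ⊂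
      {β : List Λ | 1 ≤ β.length ∧ β.length ≤ α.length ∧ (relRange Edge A β).Nonempty} ∨
    A ⊂ relRange Edge A α

/-- `β` is an irreducible path: not a repetition of a proper initial path. -/
def IrreduciblePath (β : List Λ) : Prop :=
  ∀ k : ℕ, 1 ≤ k → k < β.length → ∀ m : ℕ, β ≠ (List.replicate m (β.take k)).flatten

/-- The generalized vertex `[v]_l`. -/
def gvClass (Edge : V → Λ → V → Prop) (l : ℕ) (v : V) : Set V :=
  {w | ∀ β : List Λ, 1 ≤ β.length → β.length ≤ l → (v ∈ lrange Edge β ↔ w ∈ lrange Edge β)}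

/-- `s(x)`: sources of infinite paths labeled by `x`. -/
def srcInf (Edge : V → Λ → V → Prop) (x : ℕ → Λ) : Set V :=
  {w | ∃ p : ℕ → V, p 0 = w ∧ ∀ n : ℕ, Edge (p n) (x n) (p (n + 1))}



section AuxSat

variable (Edge : V → Λ → V → Prop)

lemma relRange_append' (S : Set V) (α β : List Λ) :
    relRange Edge S (α ++ β) = relRange Edge (relRange Edge S α) β := by
  induction α generalizing S with
  | nil => rfl
  | cons a α ih => simp only [List.cons_append, relRange]; exact ih _

lemma relRange_mono' {S T : Set V} (h : S ⊆ T) (α : List Λ) :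
    relRange Edge S α ⊆ relRange Edge T α := by
  induction α generalizing S T with
  | nil => exact h
  | cons a α ih =>
    simp only [relRange]
    exact ih fun w ⟨u, hu, he⟩ => ⟨u, h hu, he⟩

lemma relRange_subset_lrange' (S : Set V) (α : List Λ) :
    relRange Edge S α ⊆ lrange Edge α :=
  relRange_mono' Edge (Set.subset_univ S) α

lemma relRange_empty' (γ : List Λ) : relRange Edge (∅ : Set V) γ = ∅ := by
  induction γ with
  | nil => rfl
  | cons a γ ih =>
    simp only [relRange]
    have h : {w | ∃ u ∈ (∅ : Set V), Edge u a w} = (∅ : Set V) := by ext w; simp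
    rw [h]; exact ih

lemma relRange_union' (S T : Set V) (γ : List Λ) :
    relRange Edge (S ∪ T) γ = relRange Edge S γ ∪ relRange Edge T γ := by
  induction γ generalizing S T with
  | nil => rfl
  | cons a γ ih =>
    simp only [relRange]
    have hset : {w | ∃ u ∈ S ∪ T, Edge u a w}
        = {w | ∃ u ∈ S, Edge u a w} ∪ {w | ∃ u ∈ T, Edge u a w} := by
      ext w
      simp only [Set.mem_union, Set.mem_setOf_eq]
      constructor
      · rintro ⟨u, hu | hu, he⟩
        · exact Or.inl ⟨u, hu, he⟩
        · exact Or.inr ⟨u, hu, he⟩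
      · rintro (⟨u, hu, he⟩ | ⟨u, hu, he⟩)
        · exact ⟨u, Or.inl hu, he⟩
        · exact ⟨u, Or.inr hu, he⟩
    rw [hset]
    exact ih _ _

lemma relRange_biUnion_list' (A : Set V) (l : List (List Λ)) (γ : List Λ) :
    relRange Edge (⋃ α ∈ l, relRange Edge A α) γ ⊆
      ⋃ α ∈ l, relRange Edge A (α ++ γ) := by
  induction l with
  | nil =>
    simp only [List.not_mem_nil, Set.iUnion_of_empty, Set.iUnion_empty]
    rw [relRange_empty']
  | cons a l ih =>
    simp only [List.mem_cons, Set.iUnion_iUnion_eq_or_left]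
    rw [relRange_union']
    exact Set.union_subset_union (le_of_eq (relRange_append' Edge A a γ).symm) ih

/-- Replace a covering list by one consisting of labeled paths only. -/
lemma trim_to_LP (A : Set V) (l : List (List Λ)) (hne : ∀ α ∈ l, α ≠ []) :
    ∃ l' : List (List Λ), (∀ α ∈ l', IsLP Edge α) ∧
      (⋃ α ∈ l, relRange Edge A α) ⊆ ⋃ α ∈ l', relRange Edge A α := by
  induction l with
  | nil => exact ⟨[], by simp, by simp⟩
  | cons a l ih =>
    obtain ⟨l', hl', hsub⟩ := ih fun α h => hne α (List.mem_cons_of_mem _ h)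
    by_cases h : (lrange Edge a).Nonempty
    · refine ⟨a :: l', ?_, ?_⟩
      · intro α hα
        rcases List.mem_cons.mp hα with rfl | hα
        · exact ⟨hne _ List.mem_cons_self, h⟩
        · exact hl' α hα
      · simp only [List.mem_cons, Set.iUnion_iUnion_eq_or_left]
        exact Set.union_subset_union (le_refl _) hsub
    · refine ⟨l', hl', ?_⟩
      have hae : relRange Edge A a = ∅ := by
        rw [Set.not_nonempty_iff_eq_empty] at h
        exact Set.subset_empty_iff.mp (h ▸ relRange_subset_lrange' Edge A a)
      simp only [List.mem_cons, Set.iUnion_iUnion_eq_or_left, hae]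
      simpa using hsub

lemma wordPrefix_add (x : ℕ → Λ) (m n : ℕ) :
    wordPrefix x (m + n) = wordPrefix x m ++ List.ofFn (fun i : Fin n => x (m + i.val)) := by
  unfold wordPrefix
  rw [List.ofFn_add]
  rfl

end AuxSat
/-- if `S(H(A)) = ℰ` for every nonempty `A ∈ ℰ`, then the labeled space is
strongly cofinal and every `B ∈ ℰ` differs from an element of `H(A)` by a regular set. -/
theorem saturation_full_implies_cofinal_and_regular (Edge : V → Λ → V → Prop)
    (ℰ : Set (Set V)) (hsm : SmallestAccom Edge ℰ) (hwlr : WLR Edge ℰ)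
    (hfull : ∀ A ∈ ℰ, A.Nonempty → SHSet Edge ℰ A = ℰ) :
    StrCofinal Edge ℰ ∧
      ∀ A ∈ ℰ, A.Nonempty → ∀ B ∈ ℰ, ∃ C ∈ ℰ, RegularSet Edge ℰ C ∧
        B \ C ∈ HSet Edge ℰ A := by
  have hE := hsm.1
  have hND := hsm.2.1
  constructor
  · -- strong cofinality
    intro A hA hAne x hx
    have h1 : IsLP Edge (wordPrefix x 1) := hx 1 le_rfl
    have hB : lrange Edge (wordPrefix x 1) ∈ ℰ := hE.1 _ h1
    have hBS : lrange Edge (wordPrefix x 1) ∈ SHSet Edge ℰ A := by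
      rw [hfull A hA hAne]; exact hB
    obtain ⟨-, n, hlen, -⟩ := hBS
    set β : List Λ := List.ofFn (fun i : Fin n => x (1 + i.val)) with hβdef
    have hpre : wordPrefix x (1 + n) = wordPrefix x 1 ++ β := wordPrefix_add x 1 n
    have hrel : relRange Edge (lrange Edge (wordPrefix x 1)) β
        = lrange Edge (wordPrefix x (1 + n)) := by
      rw [hpre]
      exact (relRange_append' Edge Set.univ (wordPrefix x 1) β).symm
    have hlr : (lrange Edge (wordPrefix x (1 + n))).Nonempty :=
      (hx (1 + n) (by omega)).2
    have hβcase : β = [] ∨ IsLP Edge β := by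
      rcases Nat.eq_zero_or_pos n with h0 | h0
      · left; subst h0; rfl
      · right
        refine ⟨?_, ?_⟩
        · intro h
          have : β.length = n := List.length_ofFn
          rw [h] at this; simp at this; omega
        · refine hlr.mono ?_
          rw [← hrel]
          exact relRange_subset_lrange' Edge _ β
    have hCH : lrange Edge (wordPrefix x (1 + n)) ∈ HSet Edge ℰ A := by
      rw [← hrel]
      exact hlen β hβcase List.length_ofFn
    obtain ⟨hCE, l, hl, hcov⟩ := hCH
    -- take one more step
    set γ : List Λ := [x (1 + n)] with hγdef
    have hpre2 : wordPrefix x (1 + n + 1) = wordPrefix x (1 + n) ++ γ := by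
      have := wordPrefix_add x (1 + n) 1
      simpa using this
    have hrel2 : relRange Edge (lrange Edge (wordPrefix x (1 + n))) γ
        = lrange Edge (wordPrefix x (1 + n + 1)) := by
      rw [hpre2]
      exact (relRange_append' Edge Set.univ (wordPrefix x (1 + n)) γ).symm
    have hcov2 : lrange Edge (wordPrefix x (1 + n + 1)) ⊆
        ⋃ α ∈ l.map (· ++ γ), relRange Edge A α := by
      rw [← hrel2]
      refine (relRange_mono' Edge hcov γ).trans ?_
      refine (relRange_biUnion_list' Edge A l γ).trans ?_
      intro w hw
      simp only [Set.mem_iUnion, List.mem_map] at hw ⊢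
      obtain ⟨α, hα, hwα⟩ := hw
      exact ⟨α ++ γ, ⟨α, hα, rfl⟩, hwα⟩
    obtain ⟨l', hl', hsub⟩ := trim_to_LP Edge A (l.map (· ++ γ)) (by
      intro α hα
      simp only [List.mem_map] at hα
      obtain ⟨α', -, rfl⟩ := hα
      simp [hγdef])
    exact ⟨1 + n + 1, by omega, l', hl', hcov2.trans hsub⟩
  · -- regular difference
    intro A hA hAne B hB
    have hBS : B ∈ SHSet Edge ℰ A := by rw [hfull A hA hAne]; exact hB
    obtain ⟨-, n, hlen, hlt⟩ := hBS
    rcases Nat.eq_zero_or_pos n with h0 | h0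
    · subst h0
      have hBH : B ∈ HSet Edge ℰ A := hlen [] (Or.inl rfl) rfl
      refine ⟨∅, hND.1, ?_, ?_⟩
      · intro C hC hCsub hCne
        exact absurd (Set.subset_empty_iff.mp hCsub) (Set.nonempty_iff_ne_empty.mp hCne)
      · simpa using hBH
    · obtain ⟨C, hCH, D, hDE, hDreg, hBCD⟩ := hlt [] (Or.inl rfl) h0
      have hBCD' : B = C ∪ D := hBCD
      obtain ⟨hCE, l, hl, hcov⟩ := hCH
      refine ⟨D, hDE, hDreg, ?_, l, hl, ?_⟩
      · exact hND.2 B hB D hDE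
      · intro w hw
        have : w ∈ C := by
          rcases hBCD' ▸ hw.1 with h | h
          · exact h
          · exact absurd h hw.2
        exact hcov this
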